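/- Let v_1 > v_2 > ⋯ > v_k > 0, let x_1,…,x_k be orthonormal vectors in ℂⁿ (k ≤ n), and let ρ ∈ Dens(n). Then Σ_{i=1}^k v_i (x_i* ρ x_i) ≤ Σ_{i=1}^k v_i λ_i(ρ), with equality if and only if x_1,…,x_k are eigenvectors of ρ with ρ x_i = λ_i(ρ) x_i for i = 1,…,k. Consequently the quantum score with report set the tuples of k orthonormal vectors, measurement μ(x_1,…,x_k) = {x_1x_1*,…,x_kx_k*, I − Σ_i x_ix_i*} and payment v_y for outcome y ≤ k (and 0 otherwise) elicits the set of tuples of orthonormal eigenvectors corresponding to the top k eigenvalues of ρ. -/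

import Mathlib

open Matrix BigOperators ComplexOrder

noncomputable section

/-- The space of `n × n` complex matrices. -/
abbrev Mat (n : ℕ) := Matrix (Fin n) (Fin n) ℂ

/-- The set of density matrices on ℂⁿ: positive semidefinite with trace 1. -/
def Dens (n : ℕ) : Set (Mat n) := {ρ | ρ.PosSemidef ∧ ρ.trace = 1}

/-- Real inner product on (Hermitian) matrices: ⟨A,B⟩ = Tr(AB) (real part). -/
def hip {n : ℕ} (A B : Mat n) : ℝ := ((A * B).trace).re

/-- A POVM with finite outcome set `Y`. -/
def IsPOVM {n : ℕ} {Y : Type*} [Fintype Y] (μ : Y → Mat n) : Prop :=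
  (∀ y, (μ y).PosSemidef) ∧ ∑ y, μ y = 1

/-- A projection-valued measurement. -/
def IsPVM {n : ℕ} {Y : Type*} [Fintype Y] (μ : Y → Mat n) : Prop :=
  IsPOVM μ ∧ (∀ y, (μ y).IsHermitian ∧ μ y * μ y = μ y) ∧
    ∀ y y', y ≠ y' → μ y * μ y' = 0

/-- Expected score of a quantum score with report type `R`. -/
def expScoreR {n : ℕ} {R : Type*} {Y : Type*} [Fintype Y]
    (s : R → Y → ℝ) (μ : R → Y → Mat n) (r : R) (ρ : Mat n) : ℝ :=
  ∑ y, hip (μ r y) ρ * s r y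

/-- Truthfulness of a quantum score. -/
def Truthful {n : ℕ} {Y : Type*} [Fintype Y]
    (s : Mat n → Y → ℝ) (μ : Mat n → Y → Mat n) : Prop :=
  ∀ ρ ∈ Dens n, ∀ ρ' ∈ Dens n, expScoreR s μ ρ' ρ ≤ expScoreR s μ ρ ρ

/-- Strict truthfulness of a quantum score. -/
def StrictlyTruthful {n : ℕ} {Y : Type*} [Fintype Y]
    (s : Mat n → Y → ℝ) (μ : Mat n → Y → Mat n) : Prop :=
  Truthful s μ ∧ ∀ ρ ∈ Dens n, ∀ ρ' ∈ Dens n,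
    expScoreR s μ ρ' ρ = expScoreR s μ ρ ρ → ρ' = ρ

/-- `d` is a (Hermitian-matrix) subgradient of `F` at `ρ` relative to `Dens n`. -/
def IsQSubgrad {n : ℕ} (F : Mat n → ℝ) (ρ d : Mat n) : Prop :=
  ∀ τ ∈ Dens n, F ρ + hip d (τ - ρ) ≤ F τ

/-- `d` is a subgradient of `f` at `p` relative to `P ⊆ ℝ^Y`. -/
def IsCSubgrad {Y : Type*} [Fintype Y] (P : Set (Y → ℝ)) (f : (Y → ℝ) → ℝ)
    (p d : Y → ℝ) : Prop :=
  ∀ q ∈ P, f p + ∑ y, d y * (q y - p y) ≤ f q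

/-- A POVM is tomographically complete if the real span of its elements is
the set of Hermitian matrices. -/
def TomoComplete {n : ℕ} {Y : Type*} [Fintype Y] (μ : Y → Mat n) : Prop :=
  ∀ X : Mat n, X.IsHermitian ↔ X ∈ Submodule.span ℝ (Set.range μ)

/-- The eigenvalues of a Hermitian matrix, in non-increasing order
(junk value `0` on non-Hermitian matrices). -/
def eigs {n : ℕ} (ρ : Mat n) : Fin n → ℝ :=
  if h : ρ.IsHermitian then
    fun i => (h.eigenvalues ∘ (Tuple.sort h.eigenvalues)) i.rev
  else 0

/-- The outer product `v v*`. -/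
def outer {n : ℕ} (v : Fin n → ℂ) : Mat n := Matrix.vecMulVec v (star v)

/-- A family of orthonormal vectors in ℂⁿ. -/
def ONFam {n k : ℕ} (x : Fin k → Fin n → ℂ) : Prop :=
  ∀ i j, ∑ m, (starRingEnd ℂ) (x i m) * x j m = if i = j then 1 else 0

/-- `x` is a spectral decomposition of `ρ` (with eigenvalues in non-increasing
order `eigs ρ`). -/
def IsSpecDecomp {n : ℕ} (ρ : Mat n) (x : Fin n → Fin n → ℂ) : Prop :=
  ONFam x ∧ ρ = ∑ y, (eigs ρ y : ℂ) • outer (x y)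

/-- Expected classical score `ŝ(q; p)`. -/
def cExp {n : ℕ} (s : (Fin n → ℝ) → Fin n → ℝ) (q p : Fin n → ℝ) : ℝ :=
  ∑ y, p y * s q y

/-- Properness of a classical scoring rule. -/
def Proper {n : ℕ} (s : (Fin n → ℝ) → Fin n → ℝ) : Prop :=
  ∀ p ∈ stdSimplex ℝ (Fin n), ∀ q ∈ stdSimplex ℝ (Fin n), cExp s q p ≤ cExp s p p

/-- Strict properness of a classical scoring rule. -/
def StrictlyProper {n : ℕ} (s : (Fin n → ℝ) → Fin n → ℝ) : Prop :=
  Proper s ∧ ∀ p ∈ stdSimplex ℝ (Fin n), ∀ q ∈ stdSimplex ℝ (Fin n),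
    cExp s q p = cExp s p p → q = p

/-- Permutation invariance of a classical scoring rule: `ŝ(p, y) = ŝ(πp, π y)`
where `(πp)_y = p_{π y}`. -/
def PermInv {n : ℕ} (s : (Fin n → ℝ) → Fin n → ℝ) : Prop :=
  ∀ (π : Equiv.Perm (Fin n)) (p : Fin n → ℝ) (y : Fin n), s p y = s (p ∘ π) (π y)

/-- Expected spectral score `S[ŝ](ρ'; ρ)` computed using the spectral
decomposition `x` of the report `ρ'`. -/
def specExp {n : ℕ} (s : (Fin n → ℝ) → Fin n → ℝ) (x : Fin n → Fin n → ℂ)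
    (ρ' ρ : Mat n) : ℝ :=
  ∑ y, hip (outer (x y)) ρ * s (eigs ρ') y

/-- Truthfulness of the spectral score `S[ŝ]`. -/
def SpecTruthful {n : ℕ} (s : (Fin n → ℝ) → Fin n → ℝ) : Prop :=
  ∀ ρ ∈ Dens n, ∀ ρ' ∈ Dens n, ∀ x z, IsSpecDecomp ρ' x → IsSpecDecomp ρ z →
    specExp s x ρ' ρ ≤ specExp s z ρ ρ

/-- Strict truthfulness of the spectral score `S[ŝ]`. -/
def SpecStrictlyTruthful {n : ℕ} (s : (Fin n → ℝ) → Fin n → ℝ) : Prop :=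
  SpecTruthful s ∧ ∀ ρ ∈ Dens n, ∀ ρ' ∈ Dens n, ∀ x z,
    IsSpecDecomp ρ' x → IsSpecDecomp ρ z →
    specExp s x ρ' ρ = specExp s z ρ ρ → ρ' = ρ

/-- Elicitability of a property of density matrices by a quantum score. -/
def ElicitableProp {n : ℕ} {R : Type*} (Γ : Mat n → R) : Prop :=
  ∃ (m : ℕ) (s : R → Fin m → ℝ) (μ : R → Fin m → Mat n),
    (∀ r, IsPOVM (μ r)) ∧
    ∀ ρ ∈ Dens n, ∀ r, (∀ r', expScoreR s μ r' ρ ≤ expScoreR s μ r ρ) ↔ r = Γ ρ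

/-- Identifiability of an ℝᵏ-valued property of density matrices. -/
def IdentifiableProp {n k : ℕ} (Γ : Mat n → (Fin k → ℝ)) : Prop :=
  ∃ V : (Fin k → ℝ) → Fin k → Mat n,
    ∀ r ∈ Γ '' (Dens n), (∀ i, (V r i).IsHermitian) ∧
      ∀ ρ ∈ Dens n, (Γ ρ = r ↔ ∀ i, hip (V r i) ρ = 0)

/-- `Γ` is `k`-elicitable. -/
def KElicitable {n : ℕ} {R : Type*} (k : ℕ) (Γ : Mat n → R) : Prop :=
  ∃ (Γh : Mat n → (Fin k → ℝ)) (ψ : (Fin k → ℝ) → R),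
    ElicitableProp Γh ∧ IdentifiableProp Γh ∧ ∀ ρ ∈ Dens n, Γ ρ = ψ (Γh ρ)

end


section Aux

open Finset


lemma kyfan_abstract {k n : ℕ} (hk : k ≤ n) (v : Fin k → ℝ) (hv : StrictAnti v)
    (hvpos : ∀ i, 0 < v i) (μ : Fin n → ℝ) (hμ : Antitone μ)
    (p : Fin k → Fin n → ℝ) (hp0 : ∀ i m, 0 ≤ p i m)
    (hrow : ∀ i, ∑ m, p i m = 1) (hcol : ∀ m, ∑ i, p i m ≤ 1) :
    (∑ i, v i * (∑ m, μ m * p i m) ≤ ∑ i, v i * μ (Fin.castLE hk i)) ∧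
    (∑ i, v i * (∑ m, μ m * p i m) = ∑ i, v i * μ (Fin.castLE hk i) →
      ∀ (i : Fin k) (m : Fin n), (μ m - μ (Fin.castLE hk i)) * p i m = 0) := by
  classical
  set V : ℕ → ℝ := fun j => if h : j < k then v ⟨j, h⟩ else 0 with hV
  set P : ℕ → Fin n → ℝ := fun j m => if h : j < k then p ⟨j, h⟩ m else 0 with hPdef
  set C : ℕ → ℝ := fun j => ∑ m, μ m * P j m with hCdef
  set M : ℕ → ℝ := fun j => if h : j < n then μ ⟨j, h⟩ else 0 with hMdef
  have hP0 : ∀ j m, 0 ≤ P j m := by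
    intro j m; simp only [hPdef]; split
    · exact hp0 _ _
    · exact le_refl 0
  have hProw : ∀ j, j < k → ∑ m, P j m = 1 := by
    intro j hj; simp only [hPdef, dif_pos hj]; exact hrow _
  have hsum1 : ∑ i : Fin k, v i * (∑ m, μ m * p i m) = ∑ j ∈ Finset.range k, V j * C j := by
    rw [Finset.sum_range]
    refine Finset.sum_congr rfl fun i _ => ?_
    simp only [hV, hCdef, hPdef, dif_pos i.isLt, Fin.eta]
  have hMcast : ∀ i : Fin k, M (i : ℕ) = μ (Fin.castLE hk i) := by
    intro i
    simp only [hMdef, dif_pos (lt_of_lt_of_le i.isLt hk)]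
    rfl
  have hsum2 : ∑ i : Fin k, v i * μ (Fin.castLE hk i) = ∑ j ∈ Finset.range k, V j * M j := by
    rw [Finset.sum_range]
    refine Finset.sum_congr rfl fun i _ => ?_
    rw [hMcast]
    simp only [hV, dif_pos i.isLt, Fin.eta]
  have hVk : V k = 0 := dif_neg (lt_irrefl k)
  have tel : ∀ i ≤ k, ∑ j ∈ Finset.Ico i k, (V j - V (j + 1)) = V i := by
    intro i hik
    rw [Finset.sum_Ico_eq_sub _ hik, Finset.sum_range_sub' V, Finset.sum_range_sub' V, hVk]
    ring
  have abel : ∀ y : ℕ → ℝ, ∑ j ∈ Finset.range k, V j * y j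
      = ∑ j ∈ Finset.range k, (V j - V (j + 1)) * (∑ i ∈ Finset.range (j + 1), y i) := by
    intro y
    calc ∑ j ∈ Finset.range k, V j * y j
        = ∑ i ∈ Finset.range k, (∑ j ∈ Finset.Ico i k, (V j - V (j + 1))) * y i := by
          refine Finset.sum_congr rfl fun i hi => ?_
          rw [tel i (le_of_lt (Finset.mem_range.mp hi))]
      _ = ∑ i ∈ Finset.range k, ∑ j ∈ Finset.Ico i k, (V j - V (j + 1)) * y i := by
          refine Finset.sum_congr rfl fun i _ => ?_; rw [Finset.sum_mul]
      _ = ∑ j ∈ Finset.range k, ∑ i ∈ Finset.range (j + 1), (V j - V (j + 1)) * y i := by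
          have h := Finset.sum_Ico_Ico_comm 0 k (fun i j => (V j - V (j + 1)) * y i)
          simp only [Finset.range_eq_Ico]
          exact h
      _ = ∑ j ∈ Finset.range k, (V j - V (j + 1)) * (∑ i ∈ Finset.range (j + 1), y i) := by
          refine Finset.sum_congr rfl fun j _ => ?_; rw [Finset.mul_sum]
  have hd : ∀ j, j < k → 0 < V j - V (j + 1) := by
    intro j hj
    by_cases h2 : j + 1 < k
    · have hlt : (⟨j, hj⟩ : Fin k) < ⟨j + 1, h2⟩ := Fin.mk_lt_mk.mpr (Nat.lt_succ_self j)
      have := hv hlt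
      simp only [hV, dif_pos hj, dif_pos h2]
      linarith
    · simp only [hV, dif_pos hj, dif_neg h2]
      have := hvpos ⟨j, hj⟩
      linarith
  -- key per-j analysis
  have key : ∀ j, ∀ hj : j < k,
      (∑ i ∈ Finset.range (j + 1), C i ≤ ∑ i ∈ Finset.range (j + 1), M i) ∧
      ((∑ i ∈ Finset.range (j + 1), C i = ∑ i ∈ Finset.range (j + 1), M i) →
        ∀ m : Fin n, μ m < μ ⟨j, lt_of_lt_of_le hj hk⟩ →
          ∑ i ∈ Finset.range (j + 1), P i m = 0) := by
    intro j hj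
    have hjn : j < n := lt_of_lt_of_le hj hk
    set t : Fin n → ℝ := fun m => ∑ i ∈ Finset.range (j + 1), P i m with htdef
    set e : Fin n → ℝ := fun m => if (m : ℕ) < j + 1 then 1 else 0 with hedef
    have hfilter : (Finset.range n).filter (fun l => l < j + 1) = Finset.range (j + 1) := by
      ext l; simp; omega
    have hLe : ∑ i ∈ Finset.range (j + 1), M i = ∑ m : Fin n, μ m * e m := by
      have h1 : ∀ m : Fin n, μ m * e m = if (m : ℕ) < j + 1 then M (m : ℕ) else 0 := by
        intro m
        simp only [hedef, hMdef, dif_pos m.isLt, Fin.eta]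
        split <;> simp
      rw [Finset.sum_congr rfl fun m _ => h1 m]
      rw [Fin.sum_univ_eq_sum_range (fun l => if l < j + 1 then M l else 0) n]
      rw [Finset.sum_ite, Finset.sum_const_zero, add_zero, hfilter]
    have hesum : ∑ m : Fin n, e m = (j + 1 : ℝ) := by
      simp only [hedef]
      rw [Fin.sum_univ_eq_sum_range (fun l => if l < j + 1 then (1:ℝ) else 0) n]
      rw [Finset.sum_ite, Finset.sum_const_zero, add_zero, hfilter]
      simp
    have htsum : ∑ m : Fin n, t m = (j + 1 : ℝ) := by
      simp only [htdef]
      rw [Finset.sum_comm]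
      rw [Finset.sum_congr rfl fun i hi => hProw i (lt_of_lt_of_le (Finset.mem_range.mp hi) hj)]
      simp
    have hTe : ∑ i ∈ Finset.range (j + 1), C i = ∑ m : Fin n, μ m * t m := by
      simp only [hCdef, htdef]
      rw [Finset.sum_comm]
      refine Finset.sum_congr rfl fun m _ => ?_
      rw [Finset.mul_sum]
    set g : Fin n → ℝ := fun m => (μ m - μ ⟨j, hjn⟩) * (e m - t m) with hgdef
    have hgsum : ∑ m, g m
        = (∑ m, μ m * e m) - (∑ m, μ m * t m)
          - μ ⟨j, hjn⟩ * (∑ m, e m) + μ ⟨j, hjn⟩ * (∑ m, t m) := by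
      rw [Finset.mul_sum, Finset.mul_sum, ← Finset.sum_sub_distrib, ← Finset.sum_sub_distrib,
        ← Finset.sum_add_distrib]
      exact Finset.sum_congr rfl fun m _ => by simp only [hgdef]; ring
    have hgsum2 : ∑ m, g m = (∑ i ∈ Finset.range (j + 1), M i) - ∑ i ∈ Finset.range (j + 1), C i := by
      rw [hgsum, hesum, htsum, hLe, hTe]; ring
    have hgnn : ∀ m : Fin n, 0 ≤ g m := by
      intro m
      simp only [hgdef]
      by_cases hm : (m : ℕ) < j + 1
      · have h1 : μ ⟨j, hjn⟩ ≤ μ m := hμ (by simp [Fin.le_def]; omega)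
        have h2 : t m ≤ 1 := by
          calc t m ≤ ∑ i ∈ Finset.range k, P i m := by
                refine Finset.sum_le_sum_of_subset_of_nonneg
                  (Finset.range_subset_range.mpr hj) fun i _ _ => hP0 i m
            _ = ∑ i : Fin k, p i m := by
                rw [Finset.sum_range]
                exact Finset.sum_congr rfl fun i _ => by
                  simp only [hPdef, dif_pos i.isLt, Fin.eta]
            _ ≤ 1 := hcol m
        have he1 : e m = 1 := if_pos hm
        rw [he1]
        exact mul_nonneg (by linarith) (by linarith)
      · have h1 : μ m ≤ μ ⟨j, hjn⟩ := hμ (by simp [Fin.le_def]; omega)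
        have h2 : 0 ≤ t m := Finset.sum_nonneg fun i _ => hP0 i m
        have he0 : e m = 0 := if_neg hm
        rw [he0]
        nlinarith
    constructor
    · have := Finset.sum_nonneg fun m (_ : m ∈ Finset.univ) => hgnn m
      rw [hgsum2] at this
      linarith
    · intro heq m hlt
      have hzero : ∑ m, g m = 0 := by rw [hgsum2, heq]; ring
      have hall := (Finset.sum_eq_zero_iff_of_nonneg fun m _ => hgnn m).mp hzero m (Finset.mem_univ m)
      have hmge : ¬ ((m : ℕ) < j + 1) := by
        intro hcon
        have : μ ⟨j, hjn⟩ ≤ μ m := hμ (by simp [Fin.le_def]; omega)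
        linarith
      have he0 : e m = 0 := if_neg hmge
      simp only [hgdef, he0] at hall
      rcases mul_eq_zero.mp hall with h1 | h2
      · exfalso; have : μ m - μ ⟨j, hjn⟩ < 0 := by linarith
        linarith [h1]
      · have : t m = 0 := by linarith [h2]
        simpa only [htdef] using this
  have hTL : ∀ j, j < k → ∑ i ∈ Finset.range (j + 1), C i ≤ ∑ i ∈ Finset.range (j + 1), M i :=
    fun j hj => (key j hj).1
  have hineq : ∑ j ∈ Finset.range k, V j * C j ≤ ∑ j ∈ Finset.range k, V j * M j := by
    rw [abel C, abel M]
    refine Finset.sum_le_sum fun j hj => ?_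
    have hj' := Finset.mem_range.mp hj
    exact mul_le_mul_of_nonneg_left (hTL j hj') (le_of_lt (hd j hj'))
  constructor
  · rw [hsum1, hsum2]; exact hineq
  · intro heq
    rw [hsum1, hsum2] at heq
    have hdiff : ∑ j ∈ Finset.range k,
        (V j - V (j + 1)) * ((∑ i ∈ Finset.range (j + 1), M i) - ∑ i ∈ Finset.range (j + 1), C i) = 0 := by
      have h2 := heq
      rw [abel C, abel M] at h2
      have h3 : ∀ j : ℕ,
          (V j - V (j + 1)) * ((∑ i ∈ Finset.range (j + 1), M i) - ∑ i ∈ Finset.range (j + 1), C i)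
          = (V j - V (j + 1)) * (∑ i ∈ Finset.range (j + 1), M i)
            - (V j - V (j + 1)) * (∑ i ∈ Finset.range (j + 1), C i) := fun j => by ring
      rw [Finset.sum_congr rfl fun j _ => h3 j, Finset.sum_sub_distrib, h2]
      ring
    have hjeq : ∀ j, j < k → ∑ i ∈ Finset.range (j + 1), C i = ∑ i ∈ Finset.range (j + 1), M i := by
      intro j hj
      have hterm := (Finset.sum_eq_zero_iff_of_nonneg ?_).mp hdiff j (Finset.mem_range.mpr hj)
      · rcases mul_eq_zero.mp hterm with h | h
        · exfalso; have := hd j hj; linarith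
        · linarith
      · intro j' hj'
        have hj'' := Finset.mem_range.mp hj'
        exact mul_nonneg (le_of_lt (hd j' hj'')) (by linarith [hTL j' hj''])
    have claim1 : ∀ (i : Fin k) (m : Fin n), μ m < μ (Fin.castLE hk i) → p i m = 0 := by
      intro i m hlt
      have hj : (i : ℕ) < k := i.isLt
      have hcast : (⟨(i : ℕ), lt_of_lt_of_le hj hk⟩ : Fin n) = Fin.castLE hk i := rfl
      have h0 := (key (i : ℕ) hj).2 (hjeq (i : ℕ) hj) m (by rw [hcast]; exact hlt)
      have h1 := (Finset.sum_eq_zero_iff_of_nonneg fun i' _ => hP0 i' m).mp h0 (i : ℕ)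
        (Finset.mem_range.mpr (Nat.lt_succ_self _))
      simpa only [hPdef, dif_pos hj, Fin.eta] using h1
    have hpre : ∀ j, j ≤ k → ∑ i ∈ Finset.range j, C i = ∑ i ∈ Finset.range j, M i := by
      intro j hjk
      cases j with
      | zero => simp
      | succ j' => exact hjeq j' (by omega)
    have hCM : ∀ j, ∀ hj : j < k, C j = M j := by
      intro j hj
      have a1 := hpre (j + 1) hj
      have a2 := hpre j (le_of_lt hj)
      rw [Finset.sum_range_succ, Finset.sum_range_succ] at a1
      linarith
    intro i m
    rcases lt_or_ge (μ m) (μ (Fin.castLE hk i)) with hlt | hge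
    · rw [claim1 i m hlt, mul_zero]
    · have hj : (i : ℕ) < k := i.isLt
      have hc := hCM (i : ℕ) hj
      have hC' : C (i : ℕ) = ∑ m', μ m' * p i m' := by
        simp only [hCdef, hPdef, dif_pos hj, Fin.eta]
      have hM' : M (i : ℕ) = μ (Fin.castLE hk i) := hMcast i
      rw [hC', hM'] at hc
      have hzero : ∑ m', (μ (Fin.castLE hk i) - μ m') * p i m' = 0 := by
        have h4 : ∀ m' : Fin n, (μ (Fin.castLE hk i) - μ m') * p i m'
            = μ (Fin.castLE hk i) * p i m' - μ m' * p i m' := fun m' => by ring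
        rw [Finset.sum_congr rfl fun m' _ => h4 m', Finset.sum_sub_distrib, ← Finset.mul_sum,
          hrow i, mul_one, hc]
        ring
      have hterm : ∀ m' : Fin n, (μ (Fin.castLE hk i) - μ m') * p i m' ≤ 0 := by
        intro m'
        rcases lt_or_ge (μ m') (μ (Fin.castLE hk i)) with h | h
        · rw [claim1 i m' h, mul_zero]
        · have h5 := mul_nonneg (show (0:ℝ) ≤ μ m' - μ (Fin.castLE hk i) by linarith) (hp0 i m')
          nlinarith
      have hterm0 := (Finset.sum_eq_zero_iff_of_nonneg
        (fun m' (_ : m' ∈ Finset.univ) => neg_nonneg.mpr (hterm m'))).mp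
        (by rw [Finset.sum_neg_distrib, hzero]; ring) m (Finset.mem_univ m)
      have h7 : (μ (Fin.castLE hk i) - μ m) * p i m = 0 := by linarith
      rw [show (μ m - μ (Fin.castLE hk i)) * p i m
        = -((μ (Fin.castLE hk i) - μ m) * p i m) from by ring, h7, neg_zero]


lemma hip_outer_apply {n : ℕ} (w : Fin n → ℂ) (ρ : Mat n) :
    hip (outer w) ρ = (∑ t, (starRingEnd ℂ) (w t) * ρ.mulVec w t).re := by
  unfold hip outer
  rw [Matrix.trace]
  congr 1
  simp only [Matrix.diag_apply, Matrix.mul_apply, Matrix.vecMulVec_apply, Pi.star_apply,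
    Matrix.mulVec, dotProduct]
  rw [Finset.sum_comm]
  refine Finset.sum_congr rfl fun t _ => ?_
  rw [Finset.mul_sum]
  refine Finset.sum_congr rfl fun s _ => ?_
  simp [RCLike.star_def]
  ring

lemma inner_expand {n : ℕ} (u : Fin n → Fin n → ℂ) (hu : ONFam u) (w w' : Fin n → ℂ)
    (a a' : Fin n → ℂ)
    (hw : ∀ t, w t = ∑ m, a m * u m t) (hw' : ∀ t, w' t = ∑ m, a' m * u m t) :
    ∑ t, (starRingEnd ℂ) (w t) * w' t = ∑ m, (starRingEnd ℂ) (a m) * a' m := by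
  classical
  calc ∑ t, (starRingEnd ℂ) (w t) * w' t
      = ∑ t, ∑ m, ∑ m', ((starRingEnd ℂ) (a m) * a' m') * ((starRingEnd ℂ) (u m t) * u m' t) := by
        refine Finset.sum_congr rfl fun t _ => ?_
        rw [hw, hw', map_sum, Finset.sum_mul_sum]
        refine Finset.sum_congr rfl fun m _ => Finset.sum_congr rfl fun m' _ => ?_
        simp only [_root_.map_mul]
        ring
    _ = ∑ m, ∑ m', ((starRingEnd ℂ) (a m) * a' m') * ∑ t, (starRingEnd ℂ) (u m t) * u m' t := by
        rw [Finset.sum_comm]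
        refine Finset.sum_congr rfl fun m _ => ?_
        rw [Finset.sum_comm]
        refine Finset.sum_congr rfl fun m' _ => ?_
        rw [Finset.mul_sum]
    _ = ∑ m, (starRingEnd ℂ) (a m) * a' m := by
        refine Finset.sum_congr rfl fun m _ => ?_
        rw [Finset.sum_congr rfl fun m' (_ : m' ∈ Finset.univ) => by rw [hu m m']]
        simp only [mul_ite, mul_one, mul_zero]
        rw [Finset.sum_ite_eq]
        simp

lemma eigs_antitone {n : ℕ} (ρ : Mat n) (hH : ρ.IsHermitian) : Antitone (eigs ρ) := by
  intro i j hij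
  unfold eigs
  rw [dif_pos hH]
  exact Tuple.monotone_sort hH.eigenvalues (Fin.rev_le_rev.mpr hij)

lemma onfam_bessel {n k : ℕ} (x : Fin k → Fin n → ℂ) (hx : ONFam x) (w : Fin n → ℂ)
    (hw : ∑ t, (starRingEnd ℂ) (w t) * w t = 1) :
    ∑ i : Fin k, Complex.normSq (∑ s, (starRingEnd ℂ) (w s) * x i s) ≤ 1 := by
  classical
  set X : Fin k → EuclideanSpace ℂ (Fin n) := fun i => (WithLp.equiv 2 _).symm (x i) with hX
  set W : EuclideanSpace ℂ (Fin n) := (WithLp.equiv 2 _).symm w with hW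
  have hinner : ∀ f g : Fin n → ℂ,
      (inner ℂ ((WithLp.equiv 2 (Fin n → ℂ)).symm f) ((WithLp.equiv 2 (Fin n → ℂ)).symm g) : ℂ)
        = ∑ t, (starRingEnd ℂ) (f t) * g t := by
    intro f g
    simp [PiLp.inner_apply, RCLike.inner_apply', WithLp.equiv_symm_apply]
    exact Finset.sum_congr rfl fun _ _ => mul_comm _ _
  have hXon : Orthonormal ℂ X := by
    rw [orthonormal_iff_ite]
    intro i j
    rw [hX]
    rw [hinner]
    exact hx i j
  have hWnorm : ‖W‖ ^ 2 = (1:ℝ) := by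
    have h1 : (inner ℂ W W : ℂ) = 1 := by rw [hW, hinner]; exact hw
    have h2 := inner_self_eq_norm_sq_to_K (𝕜 := ℂ) W
    rw [h1] at h2
    exact Complex.ofReal_injective (by push_cast; exact h2.symm)
  have hb := hXon.sum_inner_products_le (x := W) (s := Finset.univ)
  rw [hWnorm] at hb
  refine le_trans (le_of_eq ?_) hb
  refine Finset.sum_congr rfl fun i _ => ?_
  have h4 : (inner ℂ (X i) W : ℂ) = ∑ t, (starRingEnd ℂ) (x i t) * w t := by
    rw [hX, hW, hinner]
  have h5 : (∑ s, (starRingEnd ℂ) (w s) * x i s)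
      = (starRingEnd ℂ) (∑ t, (starRingEnd ℂ) (x i t) * w t) := by
    rw [map_sum]
    refine Finset.sum_congr rfl fun s _ => ?_
    simp [_root_.map_mul, mul_comm]
  rw [h5, Complex.normSq_conj, h4, Complex.normSq_eq_norm_sq]

lemma spectral_package {n : ℕ} (ρ : Mat n) (hH : ρ.IsHermitian) :
    ∃ u : Fin n → Fin n → ℂ, ONFam u ∧
      (∀ m, ρ.mulVec (u m) = ((eigs ρ m : ℝ) : ℂ) • u m) ∧
      (∀ w : Fin n → ℂ, ∀ t : Fin n, w t = ∑ m, (∑ s, (starRingEnd ℂ) (u m s) * w s) * u m t) := by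
  classical
  set σ := Tuple.sort hH.eigenvalues with hσ
  set e : Equiv.Perm (Fin n) := Fin.revPerm.trans σ with he
  set b := hH.eigenvectorBasis.reindex e.symm with hb
  have hbm : ∀ m, b m = hH.eigenvectorBasis (e m) := by
    intro m
    rw [hb, OrthonormalBasis.reindex_apply, Equiv.symm_symm]
  have heigs : ∀ m, eigs ρ m = hH.eigenvalues (e m) := by
    intro m
    unfold eigs
    rw [dif_pos hH]
    rfl
  have euc_sum_apply : ∀ (f : Fin n → EuclideanSpace ℂ (Fin n)) (t : Fin n),
      (∑ m, f m) t = ∑ m, f m t := fun f t =>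
    map_sum (PiLp.projₗ (𝕜 := ℂ) (β := fun _ : Fin n => ℂ) 2 t) f Finset.univ
  refine ⟨fun m t => b m t, ?_, ?_, ?_⟩
  · intro i j
    have h1 := orthonormal_iff_ite.mp b.orthonormal i j
    have h2 : (inner ℂ (b i) (b j) : ℂ) = ∑ t, (starRingEnd ℂ) (b i t) * b j t := by
      simp [PiLp.inner_apply, RCLike.inner_apply']
      exact Finset.sum_congr rfl fun _ _ => mul_comm _ _
    rw [h2] at h1
    exact h1
  · intro m
    have h2 : ρ.mulVec (fun t => b m t) = hH.eigenvalues (e m) • (fun t => b m t) := by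
      simp only [hbm]
      exact hH.mulVec_eigenvectorBasis (e m)
    funext t
    have h3 := congrFun h2 t
    simp only [Pi.smul_apply] at h3 ⊢
    rw [h3, heigs m, Complex.real_smul, smul_eq_mul]
  · intro w t
    set W : EuclideanSpace ℂ (Fin n) := (WithLp.equiv 2 _).symm w with hW
    have h1t : (∑ m, b.repr W m • b m) t = W t := by rw [b.sum_repr W]
    have h4 : (∑ m, b.repr W m • b m) t = ∑ m, b.repr W m * b m t := by
      rw [euc_sum_apply]
      exact Finset.sum_congr rfl fun m _ => rfl
    have h2 : ∀ m, b.repr W m = ∑ s, (starRingEnd ℂ) (b m s) * w s := by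
      intro m
      rw [b.repr_apply_apply]
      simp [PiLp.inner_apply, RCLike.inner_apply', hW, WithLp.equiv_symm_apply]
      exact Finset.sum_congr rfl fun _ _ => mul_comm _ _
    have h5 : W t = w t := rfl
    rw [← h5, ← h1t, h4]
    exact Finset.sum_congr rfl fun m _ => by rw [h2 m]

end Aux


lemma main_ineq {n k : ℕ} (hk : k ≤ n) (v : Fin k → ℝ) (hv : StrictAnti v)
    (hvpos : ∀ i, 0 < v i) (ρ : Mat n) (hH : ρ.IsHermitian)
    (x : Fin k → Fin n → ℂ) (hx : ONFam x) :
    (∑ i, v i * hip (outer (x i)) ρ ≤ ∑ i, v i * eigs ρ (Fin.castLE hk i)) ∧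
    (∑ i, v i * hip (outer (x i)) ρ = ∑ i, v i * eigs ρ (Fin.castLE hk i) ↔
      ∀ i, ρ.mulVec (x i) = (eigs ρ (Fin.castLE hk i) : ℂ) • x i) := by
  classical
  obtain ⟨u, hu, hueig, huexp⟩ := spectral_package ρ hH
  set μ : Fin n → ℝ := eigs ρ with hμdef
  have hμanti : Antitone μ := eigs_antitone ρ hH
  set a : Fin k → Fin n → ℂ := fun i m => ∑ s, (starRingEnd ℂ) (u m s) * x i s with ha
  set p : Fin k → Fin n → ℝ := fun i m => Complex.normSq (a i m) with hp
  have hxexp : ∀ i t, x i t = ∑ m, a i m * u m t := fun i t => huexp (x i) t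
  have hmulvec : ∀ i t, ρ.mulVec (x i) t = ∑ m, (a i m * (μ m : ℂ)) * u m t := by
    intro i t
    calc ρ.mulVec (x i) t = ∑ s, ρ t s * x i s := rfl
      _ = ∑ s, ρ t s * ∑ m, a i m * u m s :=
          Finset.sum_congr rfl fun s _ => by rw [← hxexp i s]
      _ = ∑ s, ∑ m, a i m * (ρ t s * u m s) := by
          refine Finset.sum_congr rfl fun s _ => ?_
          rw [Finset.mul_sum]
          exact Finset.sum_congr rfl fun m _ => by ring
      _ = ∑ m, ∑ s, a i m * (ρ t s * u m s) := Finset.sum_comm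
      _ = ∑ m, (a i m * (μ m : ℂ)) * u m t := by
          refine Finset.sum_congr rfl fun m _ => ?_
          rw [← Finset.mul_sum]
          have h1 : ∑ s, ρ t s * u m s = ρ.mulVec (u m) t := rfl
          rw [h1, hueig m]
          simp only [Pi.smul_apply, smul_eq_mul]
          ring
  have hmulvec' : ∀ i t, ρ.mulVec (x i) t = ∑ m, (fun m => a i m * (μ m : ℂ)) m * u m t :=
    hmulvec
  have hrowsum : ∀ i, ∑ m, p i m = 1 := by
    intro i
    have h1 := inner_expand u hu (x i) (x i) (a i) (a i) (hxexp i) (hxexp i)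
    rw [hx i i, if_pos rfl] at h1
    have h2 : ∀ m, (starRingEnd ℂ) (a i m) * a i m = ((p i m : ℝ) : ℂ) := by
      intro m
      rw [hp]
      rw [mul_comm, Complex.mul_conj]
    rw [Finset.sum_congr rfl fun m _ => h2 m] at h1
    rw [← Complex.ofReal_sum] at h1
    exact_mod_cast h1.symm
  have hcexp : ∀ i, hip (outer (x i)) ρ = ∑ m, μ m * p i m := by
    intro i
    rw [hip_outer_apply]
    have h1 := inner_expand u hu (x i) (ρ.mulVec (x i)) (a i) (fun m => a i m * (μ m : ℂ))
      (hxexp i) (hmulvec' i)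
    rw [h1]
    have h2 : ∀ m, (starRingEnd ℂ) (a i m) * (a i m * (μ m : ℂ)) = ((μ m * p i m : ℝ) : ℂ) := by
      intro m
      rw [hp]
      push_cast
      rw [show (starRingEnd ℂ) (a i m) * (a i m * (μ m : ℂ))
        = ((starRingEnd ℂ) (a i m) * a i m) * (μ m : ℂ) from by ring]
      rw [mul_comm ((starRingEnd ℂ) (a i m)) (a i m), Complex.mul_conj]
      ring
    rw [Finset.sum_congr rfl fun m _ => h2 m, ← Complex.ofReal_sum]
    exact Complex.ofReal_re _
  have hcol : ∀ m, ∑ i, p i m ≤ 1 := by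
    intro m
    have h1 := hu m m
    rw [if_pos rfl] at h1
    exact onfam_bessel x hx (u m) h1
  have hp0 : ∀ i m, 0 ≤ p i m := fun i m => Complex.normSq_nonneg _
  obtain ⟨hkf1, hkf2⟩ := kyfan_abstract hk v hv hvpos μ hμanti p hp0 hrowsum hcol
  have hsum_eq : ∑ i, v i * hip (outer (x i)) ρ = ∑ i, v i * (∑ m, μ m * p i m) :=
    Finset.sum_congr rfl fun i _ => by rw [hcexp i]
  have heig_of : ∀ i : Fin k, (∀ m, (μ m - μ (Fin.castLE hk i)) * p i m = 0) →
      ρ.mulVec (x i) = ((μ (Fin.castLE hk i) : ℝ) : ℂ) • x i := by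
    intro i h
    funext t
    rw [hmulvec i t, Pi.smul_apply, hxexp i t, smul_eq_mul, Finset.mul_sum]
    refine Finset.sum_congr rfl fun m _ => ?_
    rcases mul_eq_zero.mp (h m) with h1 | h2
    · have h3 : μ m = μ (Fin.castLE hk i) := by linarith [sub_eq_zero.mp h1]
      rw [h3]
      ring
    · have h3 : a i m = 0 := by
        have := h2
        rw [hp] at this
        exact Complex.normSq_eq_zero.mp this
      rw [h3]
      ring
  have heq_of_eig : (∀ i, ρ.mulVec (x i) = ((μ (Fin.castLE hk i) : ℝ) : ℂ) • x i) →
      ∀ i, hip (outer (x i)) ρ = μ (Fin.castLE hk i) := by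
    intro h i
    rw [hip_outer_apply]
    have h1 : ∀ t, (starRingEnd ℂ) (x i t) * ρ.mulVec (x i) t
        = ((μ (Fin.castLE hk i) : ℝ) : ℂ) * ((starRingEnd ℂ) (x i t) * x i t) := by
      intro t
      rw [h i]
      simp only [Pi.smul_apply, smul_eq_mul]
      ring
    rw [Finset.sum_congr rfl fun t _ => h1 t, ← Finset.mul_sum, hx i i, if_pos rfl, mul_one]
    exact Complex.ofReal_re _
  refine ⟨by rw [hsum_eq]; exact hkf1, ?_, ?_⟩
  · intro heq
    rw [hsum_eq] at heq
    exact fun i => heig_of i fun m => hkf2 heq i m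
  · intro h
    refine Finset.sum_congr rfl fun i _ => ?_
    rw [heq_of_eig h i]

/-- eliciting the top-k eigenvectors of a density matrix. -/
theorem elicit_top_k_eigenvectors {n k : ℕ} (hk : k ≤ n)
    (v : Fin k → ℝ) (hv : StrictAnti v) (hvpos : ∀ i, 0 < v i)
    (x : Fin k → Fin n → ℂ) (hx : ONFam x)
    (ρ : Mat n) (hρ : ρ ∈ Dens n) :
    (∑ i, v i * hip (outer (x i)) ρ ≤ ∑ i, v i * eigs ρ (Fin.castLE hk i)) ∧
    (∑ i, v i * hip (outer (x i)) ρ = ∑ i, v i * eigs ρ (Fin.castLE hk i) ↔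
      ∀ i, ρ.mulVec (x i) = (eigs ρ (Fin.castLE hk i) : ℂ) • x i) ∧
    ((∀ z : Fin k → Fin n → ℂ, ONFam z →
        ∑ i, v i * hip (outer (z i)) ρ ≤ ∑ i, v i * hip (outer (x i)) ρ) ↔
      ∀ i, ρ.mulVec (x i) = (eigs ρ (Fin.castLE hk i) : ℂ) • x i) := by
  classical
  have hH : ρ.IsHermitian := hρ.1.isHermitian
  obtain ⟨hmain1, hmain2⟩ := main_ineq hk v hv hvpos ρ hH x hx
  refine ⟨hmain1, hmain2, ?_⟩
  obtain ⟨u, hu, hueig, -⟩ := spectral_package ρ hH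
  set z : Fin k → Fin n → ℂ := fun i => u (Fin.castLE hk i) with hz
  have hzon : ONFam z := by
    intro i j
    have h1 := hu (Fin.castLE hk i) (Fin.castLE hk j)
    rw [h1]
    by_cases h : i = j
    · simp [h]
    · rw [if_neg (fun hc => h (Fin.castLE_inj.mp hc)), if_neg h]
  have hzeig : ∀ i, ρ.mulVec (z i) = (eigs ρ (Fin.castLE hk i) : ℂ) • z i :=
    fun i => hueig (Fin.castLE hk i)
  obtain ⟨hz1, hz2⟩ := main_ineq hk v hv hvpos ρ hH z hzon
  have hzeq : ∑ i, v i * hip (outer (z i)) ρ = ∑ i, v i * eigs ρ (Fin.castLE hk i) :=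
    hz2.mpr hzeig
  constructor
  · intro hmax
    apply hmain2.mp
    have h1 := hmax z hzon
    linarith
  · intro heig z' hz'
    have hxeq := hmain2.mpr heig
    obtain ⟨hz'1, -⟩ := main_ineq hk v hv hvpos ρ hH z' hz'
    linarith
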